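/- If f is a zero-free holomorphic solution of f'' + A f = 0 on the unit disc, then A = -(f'/f)' - (f'/f)^2 on the disc; consequently, if log f (a holomorphic branch) belongs to the Bloch space, i.e. sup_{z∈D} (1-|z|^2)|f'(z)/f(z)| < ∞, then sup_{z∈D} (1-|z|^2)^2 |A(z)| < ∞. -/

import Mathlib

open Metric

/-- If `f` is a zero-free solution of `f'' + A f = 0` on the unit disc, then
`A = -(f'/f)' - (f'/f)²`; consequently, if a holomorphic logarithm of `f` is a Bloch
function, i.e. `sup (1-|z|²)|f'(z)/f(z)| < ∞`, then `A ∈ H^∞₂`. -/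
theorem coefficient_formula_and_growth
    (A f f' f'' : ℂ → ℂ)
    (hf : ∀ z ∈ ball (0 : ℂ) 1, HasDerivAt f (f' z) z)
    (hf' : ∀ z ∈ ball (0 : ℂ) 1, HasDerivAt f' (f'' z) z)
    (hode : ∀ z ∈ ball (0 : ℂ) 1, f'' z + A z * f z = 0)
    (hfne : ∀ z ∈ ball (0 : ℂ) 1, f z ≠ 0) :
    (∀ z ∈ ball (0 : ℂ) 1,
      HasDerivAt (fun w => f' w / f w) (-A z - (f' z / f z) ^ 2) z) ∧
    (∀ K : ℝ, (∀ z ∈ ball (0 : ℂ) 1, (1 - ‖z‖ ^ 2) * ‖f' z / f z‖ ≤ K) →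
      ∃ N : ℝ, ∀ z ∈ ball (0 : ℂ) 1, (1 - ‖z‖ ^ 2) ^ 2 * ‖A z‖ ≤ N) := by
  set g : ℂ → ℂ := fun w => f' w / f w with hgdef
  have hg : ∀ z ∈ ball (0 : ℂ) 1, HasDerivAt g (-A z - (f' z / f z) ^ 2) z := by
    intro z hz
    have hfz := hfne z hz
    have h1 := (hf' z hz).div (hf z hz) hfz
    have hA : f'' z = -A z * f z := by linear_combination hode z hz
    refine h1.congr_deriv ?_
    rw [hA]
    field_simp
  refine ⟨hg, ?_⟩
  intro K hK
  have hK0 : 0 ≤ K := by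
    have h := hK 0 (mem_ball_self one_pos)
    simp only [norm_zero] at h
    nlinarith [norm_nonneg (f' 0 / f 0)]
  refine ⟨16 * K + K ^ 2, ?_⟩
  intro z hz
  have hz1 : ‖z‖ < 1 := by simpa using hz
  have h1z : (0:ℝ) < 1 - ‖z‖ := by linarith
  set r : ℝ := (1 - ‖z‖) / 2 with hr
  have hr0 : 0 < r := by rw [hr]; linarith
  have hsub : closedBall z r ⊆ ball (0 : ℂ) 1 := by
    intro w hw
    simp only [mem_closedBall, dist_eq_norm] at hw
    simp only [mem_ball, dist_zero_right]
    have htri : ‖w‖ ≤ ‖w - z‖ + ‖z‖ := by simpa using norm_add_le (w - z) z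
    have : r = (1 - ‖z‖) / 2 := hr
    linarith
  have hdiff : DifferentiableOn ℂ g (ball (0 : ℂ) 1) := fun w hw =>
    ((hg w hw).differentiableAt).differentiableWithinAt
  have hdc : DiffContOnCl ℂ g (ball z r) := hdiff.diffContOnCl_ball hsub
  have hsph : ∀ w ∈ sphere z r, ‖g w‖ ≤ 2 * K / (1 - ‖z‖) := by
    intro w hw
    simp only [mem_sphere, dist_eq_norm] at hw
    have hwb : w ∈ ball (0 : ℂ) 1 := hsub (by rw [mem_closedBall, dist_eq_norm, hw])
    have hw1 : ‖w‖ < 1 := by simpa using hwb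
    have htri : ‖w‖ ≤ ‖w - z‖ + ‖z‖ := by simpa using norm_add_le (w - z) z
    have hwle : ‖w‖ ≤ (1 + ‖z‖) / 2 := by rw [hw, hr] at htri; linarith
    have hlow : (1 - ‖z‖) / 2 ≤ 1 - ‖w‖ ^ 2 := by
      nlinarith [norm_nonneg w, norm_nonneg z]
    have hKw := hK w hwb
    rw [le_div_iff₀ h1z]
    nlinarith [mul_le_mul_of_nonneg_right hlow (norm_nonneg (g w))]
  have hcauchy : ‖deriv g z‖ ≤ 2 * K / (1 - ‖z‖) / r :=
    Complex.norm_deriv_le_of_forall_mem_sphere_norm_le hr0 hdc hsph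
  have hderiv : deriv g z = -A z - (f' z / f z) ^ 2 := (hg z hz).deriv
  have hAeq : A z = -(deriv g z) - (g z) ^ 2 := by rw [hderiv]; ring
  have hbound1 : ‖A z‖ ≤ ‖deriv g z‖ + ‖g z‖ ^ 2 := by
    rw [hAeq]
    calc ‖-(deriv g z) - (g z) ^ 2‖ ≤ ‖-(deriv g z)‖ + ‖(g z) ^ 2‖ := norm_sub_le _ _
    _ = ‖deriv g z‖ + ‖g z‖ ^ 2 := by rw [norm_neg, norm_pow]
  have hne : (1 - ‖z‖) ≠ 0 := ne_of_gt h1z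
  have hsq : (1 - ‖z‖ ^ 2) ^ 2 ≤ 4 * (1 - ‖z‖) ^ 2 := by
    have he : (1 - ‖z‖ ^ 2) ^ 2 = (1 - ‖z‖) ^ 2 * (1 + ‖z‖) ^ 2 := by ring
    have h4 : (1 + ‖z‖) ^ 2 ≤ 4 := by nlinarith [norm_nonneg z]
    rw [he]
    nlinarith [sq_nonneg (1 - ‖z‖)]
  have hcd : ‖deriv g z‖ ≤ 4 * K / (1 - ‖z‖) ^ 2 := by
    have : 2 * K / (1 - ‖z‖) / r = 4 * K / (1 - ‖z‖) ^ 2 := by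
      rw [hr]; field_simp; ring
    rwa [this] at hcauchy
  have h2 : (1 - ‖z‖ ^ 2) ^ 2 * ‖deriv g z‖ ≤ 16 * K := by
    calc (1 - ‖z‖ ^ 2) ^ 2 * ‖deriv g z‖ ≤ 4 * (1 - ‖z‖) ^ 2 * (4 * K / (1 - ‖z‖) ^ 2) := by
          apply mul_le_mul hsq hcd (norm_nonneg _) (by positivity)
    _ = 16 * K := by
          rw [mul_comm (4 * (1 - ‖z‖) ^ 2), div_mul_eq_mul_div,
            div_eq_iff (pow_ne_zero 2 hne)]
          ring
  have h3 : (1 - ‖z‖ ^ 2) ^ 2 * ‖g z‖ ^ 2 ≤ K ^ 2 := by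
    have h0 : 0 ≤ 1 - ‖z‖ ^ 2 := by nlinarith [norm_nonneg z]
    have hgz := hK z hz
    calc (1 - ‖z‖ ^ 2) ^ 2 * ‖g z‖ ^ 2 = ((1 - ‖z‖ ^ 2) * ‖g z‖) ^ 2 := by ring
    _ ≤ K ^ 2 := by nlinarith [mul_nonneg h0 (norm_nonneg (g z))]
  calc (1 - ‖z‖ ^ 2) ^ 2 * ‖A z‖ ≤ (1 - ‖z‖ ^ 2) ^ 2 * (‖deriv g z‖ + ‖g z‖ ^ 2) := by
        apply mul_le_mul_of_nonneg_left hbound1 (by positivity)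
  _ = (1 - ‖z‖ ^ 2) ^ 2 * ‖deriv g z‖ + (1 - ‖z‖ ^ 2) ^ 2 * ‖g z‖ ^ 2 := by ring
  _ ≤ 16 * K + K ^ 2 := add_le_add h2 h3
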